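/- Let A be a finite algebra. Then for each variety U with U ⊂ Var(A) there exists a variety W with U ⊆ W ≺ Var(A); that is, every proper subvariety of Var(A) is contained in a subcover of Var(A). -/

import Mathlib

open FirstOrder FirstOrder.Language

universe u v

/-- A bundled algebra for the language `L`: a type together with an
interpretation of the operation symbols of `L`. -/
structure Alg (L : FirstOrder.Language.{u, v}) : Type (max u v 1) where
  carrier : Type
  [str : L.Structure carrier]

attribute [instance] Alg.str

/-- An identity (equational law): a pair of terms in `n` variables. -/
abbrev Identity (L : FirstOrder.Language) :=
  Σ n : ℕ, L.Term (Fin n) × L.Term (Fin n)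

/-- `A` satisfies the identity `e`: the two induced term functions agree. -/
def Alg.Sat {L : FirstOrder.Language} (A : Alg L) (e : Identity L) : Prop :=
  ∀ v : Fin e.1 → A.carrier, e.2.1.realize v = e.2.2.realize v

/-- The class of all models of a set of identities. -/
def ModClass (L : FirstOrder.Language) (E : Set (Identity L)) : Set (Alg L) :=
  {A | ∀ e ∈ E, A.Sat e}

/-- A variety (equational class): a class of algebras defined by a set of identities. -/
def IsVariety (L : FirstOrder.Language) (V : Set (Alg L)) : Prop :=
  ∃ E : Set (Identity L), V = ModClass L E

/-- `varGen L K` is the smallest variety containing the class `K`: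
the models of all identities valid in `K`. -/
def varGen (L : FirstOrder.Language) (K : Set (Alg L)) : Set (Alg L) :=
  ModClass L {e | ∀ B ∈ K, B.Sat e}

/-- `f` is a `k`-edge operation (`k ≥ 2`): a `(k+1)`-ary operation with
`f(y,y,x,…,x) = f(y,x,y,x,…,x) = x` and `f(x,…,x,y,x,…,x) = x` whenever the
single `y` is in a position `≥ 4` (1-indexed). -/
def IsEdgeOp {A : Type} (k : ℕ) (f : (Fin (k + 1) → A) → A) : Prop :=
  (∀ x y : A, f (fun i => if (i : ℕ) ≤ 1 then y else x) = x) ∧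
  (∀ x y : A, f (fun i => if (i : ℕ) = 0 ∨ (i : ℕ) = 2 then y else x) = x) ∧
  (∀ i : Fin (k + 1), 3 ≤ (i : ℕ) → ∀ x y : A,
    f (Function.update (fun _ => x) i y) = x)

/-- An algebra has an edge term if some term induces a `k`-edge operation for some `k ≥ 2`. -/
def HasEdgeTerm (L : FirstOrder.Language) (A : Type) [L.Structure A] : Prop :=
  ∃ k : ℕ, 2 ≤ k ∧ ∃ t : L.Term (Fin (k + 1)), IsEdgeOp k (fun v : Fin (k + 1) → A => t.realize v)

/-- An algebra is `k`-generated if it is generated by a subset of size at most `k`. -/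
def KGen (L : FirstOrder.Language) (k : ℕ) (A : Alg L) : Prop :=
  ∃ S : Set A.carrier, S.Finite ∧ S.ncard ≤ k ∧ Substructure.closure L S = ⊤

/-- An algebra is finitely generated if it is generated by a finite subset. -/
def FinGen (L : FirstOrder.Language) (A : Alg L) : Prop :=
  ∃ S : Set A.carrier, S.Finite ∧ Substructure.closure L S = ⊤

/-- A class of algebras is locally finite if all of its finitely generated members
are finite. -/
def IsLocallyFinite (L : FirstOrder.Language) (V : Set (Alg L)) : Prop :=
  ∀ A ∈ V, FinGen L A → Finite A.carrier

/-- A finite algebra `B` is cardinality critical if it does not lie in the variety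
generated by the algebras in `Var(B)` of size smaller than `B`. -/
def CardCritical (L : FirstOrder.Language) (B : Alg L) : Prop :=
  Finite B.carrier ∧
    B ∉ varGen L {C | C ∈ varGen L {B} ∧ Cardinal.mk C.carrier < Cardinal.mk B.carrier}

/-- `V` is a subcover of `W`: `V ⊂ W` and no variety lies strictly between them. -/
def IsSubcover (L : FirstOrder.Language) (V W : Set (Alg L)) : Prop :=
  V ⊂ W ∧ ¬ ∃ V' : Set (Alg L), IsVariety L V' ∧ V ⊂ V' ∧ V' ⊂ W

section Aux

variable {L : FirstOrder.Language}

/-- If a variety contains `B`, it contains `varGen L {B}`. -/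
lemma varGen_singleton_subset_of_variety {V : Set (Alg L)} (hV : IsVariety L V) {B : Alg L}
    (hB : B ∈ V) : varGen L {B} ⊆ V := by
  obtain ⟨E, rfl⟩ := hV
  intro C hC e he
  exact hC e (fun D hD => by
    rw [Set.mem_singleton_iff] at hD; subst hD; exact hB e he)

lemma subset_varGen (K : Set (Alg L)) : K ⊆ varGen L K :=
  fun B hB e he => he B hB

/-- Collapsing the variables of a failing identity to `Nat.card A.carrier` variables. -/
lemma collapse (A : Alg L) [Finite A.carrier] [Nonempty A.carrier]
    {e : Identity L} (he : ¬ A.Sat e) :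
    ∃ s t : L.Term (Fin (Nat.card A.carrier)),
      ¬ A.Sat ⟨Nat.card A.carrier, (s, t)⟩ ∧
      ∀ B : Alg L, B.Sat e → B.Sat ⟨Nat.card A.carrier, (s, t)⟩ := by
  obtain ⟨n, s0, t0⟩ := e
  simp only [Alg.Sat, not_forall] at he
  obtain ⟨v, hv⟩ := he
  let g : A.carrier ≃ Fin (Nat.card A.carrier) := Finite.equivFin A.carrier
  let sig : Fin n → Fin (Nat.card A.carrier) := fun i => g (v i)
  refine ⟨s0.relabel sig, t0.relabel sig, ?_, ?_⟩
  · intro h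
    have h2 := h (fun j => g.symm j)
    simp only [Term.realize_relabel] at h2
    have hcomp : (fun j => g.symm j) ∘ sig = v := by
      funext i; simp [sig]
    rw [hcomp] at h2
    exact hv h2
  · intro B hB w
    simp only [Term.realize_relabel]
    exact hB (w ∘ sig)

/-- The variety generated by the union of a nonempty chain of proper subvarieties of
`varGen L {A}` still avoids `A`, when `A` is finite. -/
lemma chain_bound (A : Alg L) [Finite A.carrier] [Nonempty A.carrier]
    (c : Set (Set (Alg L))) (hc : IsChain (· ⊆ ·) c) (hne : c.Nonempty)
    (hS : ∀ V ∈ c, IsVariety L V ∧ V ⊆ varGen L {A} ∧ A ∉ V) :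
    A ∉ varGen L (⋃₀ c) := by
  set m := Nat.card A.carrier with hm
  let fA : L.Term (Fin m) → ((Fin m → A.carrier) → A.carrier) :=
    fun t => fun v => t.realize v
  -- the set of "bad pairs" of term functions for a class `V`
  let Bad : Set (Alg L) →
      Set (((Fin m → A.carrier) → A.carrier) × ((Fin m → A.carrier) → A.carrier)) :=
    fun V => {p | ∃ s t : L.Term (Fin m),
      (∀ B ∈ V, B.Sat ⟨m, (s, t)⟩) ∧ fA s = p.1 ∧ fA t = p.2 ∧ fA s ≠ fA t}
  -- each `Bad V` for `V ∈ c` is nonempty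
  have hBadne : ∀ V ∈ c, (Bad V).Nonempty := by
    intro V hV
    obtain ⟨⟨E, rfl⟩, hVA, hAV⟩ := hS V hV
    have hex : ∃ e ∈ E, ¬ A.Sat e := by
      by_contra h
      push_neg at h
      exact hAV h
    obtain ⟨e, heE, hAe⟩ := hex
    obtain ⟨s, t, hfail, hvalid⟩ := collapse A hAe
    refine ⟨(fA s, fA t), s, t, ?_, rfl, rfl, ?_⟩
    · exact fun B hB => hvalid B (hB e heE)
    · intro hst
      exact hfail (fun v => congrFun hst v)
  -- `Bad` is antitone
  have hBadanti : ∀ V V' : Set (Alg L), V ⊆ V' → Bad V' ⊆ Bad V := by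
    intro V V' hVV p hp
    obtain ⟨s, t, hval, h1, h2, h3⟩ := hp
    exact ⟨s, t, fun B hB => hval B (hVV hB), h1, h2, h3⟩
  -- the image family is a finite nonempty chain of sets, so it has a least element
  have hFfin : (Bad '' c).Finite := Set.toFinite _
  obtain ⟨M, hM, hMmin'⟩ := Set.Finite.exists_minimalFor id (Bad '' c) hFfin (hne.image _)
  have hMmin : ∀ X ∈ Bad '' c, id X ≤ id M → id M = id X :=
    fun X hX h => le_antisymm (hMmin' hX h) h
  have hMleast : ∀ X ∈ Bad '' c, M ⊆ X := by
    intro X hX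
    obtain ⟨V, hVc, rfl⟩ := hX
    obtain ⟨V0, hV0c, rfl⟩ := hM
    rcases hc.total hV0c hVc with h | h
    · have h2 := hMmin (Bad V) ⟨V, hVc, rfl⟩ (hBadanti _ _ h)
      simp only [id] at h2
      rw [h2]
    · exact hBadanti _ _ h
  obtain ⟨V0, hV0c, hV0M⟩ := hM
  obtain ⟨p, hp⟩ := hBadne V0 hV0c
  have hpM : p ∈ M := hV0M ▸ hp
  obtain ⟨s, t, hval0, hps, hpt, hst⟩ := hp
  -- the identity `(s,t)` is valid throughout the union
  intro hA
  have hvalid : ∀ B ∈ ⋃₀ c, B.Sat ⟨m, (s, t)⟩ := by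
    rintro B ⟨V, hVc, hBV⟩
    have hpV : p ∈ Bad V := hMleast (Bad V) ⟨V, hVc, rfl⟩ hpM
    obtain ⟨s', t', hval, hs', ht', _⟩ := hpV
    have hBA : B ∈ varGen L {A} := (hS V hVc).2.1 hBV
    have hss' : B.Sat ⟨m, (s, s')⟩ := by
      apply hBA
      intro C hC
      rw [Set.mem_singleton_iff] at hC; subst hC
      intro v
      exact congrFun (hps.trans hs'.symm) v
    have htt' : B.Sat ⟨m, (t, t')⟩ := by
      apply hBA
      intro C hC
      rw [Set.mem_singleton_iff] at hC; subst hC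
      intro v
      exact congrFun (hpt.trans ht'.symm) v
    intro w
    calc s.realize w = s'.realize w := hss' w
      _ = t'.realize w := hval B hBV w
      _ = t.realize w := (htt' w).symm
  have hsat := hA ⟨m, (s, t)⟩ hvalid
  exact hst (funext (fun v => hsat v))

end Aux

/-- **Lemma (finitely many subcovers, part 2).** Let `A` be a finite algebra. Then
every proper subvariety `U` of `Var(A)` is contained in a subcover of `Var(A)`:
there is a variety `W` with `U ⊆ W ≺ Var(A)`. -/
theorem proper_subvariety_le_subcover
    (L : FirstOrder.Language) [L.IsAlgebraic] (A : Alg L) [Finite A.carrier]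
    (U : Set (Alg L)) (hU : IsVariety L U) (hUA : U ⊂ varGen L {A}) :
    ∃ W : Set (Alg L), IsVariety L W ∧ U ⊆ W ∧ IsSubcover L W (varGen L {A}) := by
  rcases isEmpty_or_nonempty A.carrier with hA | hA
  · -- `A` empty: then `A` satisfies all identities and `varGen L {A} ⊆ U`, contradiction
    exfalso
    have hSatAll : ∀ e : Identity L, A.Sat e := fun e v => (hA.false (e.2.1.realize v)).elim
    apply hUA.2
    obtain ⟨E, rfl⟩ := hU
    intro B hB e _
    exact hB e (fun C hC => by
      rw [Set.mem_singleton_iff] at hC; subst hC; exact hSatAll e)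
  · -- `A` nonempty
    set S : Set (Set (Alg L)) :=
      {V | IsVariety L V ∧ U ⊆ V ∧ V ⊆ varGen L {A} ∧ A ∉ V} with hSdef
    -- a variety contained in `varGen L {A}` containing `A` equals `varGen L {A}`
    have key : ∀ V : Set (Alg L), IsVariety L V → V ⊆ varGen L {A} → A ∈ V →
        V = varGen L {A} := by
      intro V hV hVA hAV
      exact Set.Subset.antisymm hVA (varGen_singleton_subset_of_variety hV hAV)
    have hAnotU : A ∉ U := by
      intro h
      exact hUA.ne (key U hU hUA.subset h)
    have hUS : U ∈ S := ⟨hU, Set.Subset.rfl, hUA.subset, hAnotU⟩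
    have hchain : ∀ c ⊆ S, IsChain (· ⊆ ·) c → c.Nonempty →
        ∃ ub ∈ S, ∀ s ∈ c, s ⊆ ub := by
      intro c hcS hc hcne
      refine ⟨varGen L (⋃₀ c), ⟨⟨_, rfl⟩, ?_, ?_, ?_⟩, ?_⟩
      · -- `U ⊆ varGen L (⋃₀ c)`
        obtain ⟨V, hVc⟩ := hcne
        exact ((hcS hVc).2.1).trans ((Set.subset_sUnion_of_mem hVc).trans
          (subset_varGen _))
      · -- `varGen L (⋃₀ c) ⊆ varGen L {A}`
        intro B hB e he
        apply hB e
        intro C hC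
        obtain ⟨V, hVc, hCV⟩ := hC
        exact (hcS hVc).2.2.1 hCV e he
      · -- `A ∉ varGen L (⋃₀ c)`
        exact chain_bound A c hc hcne (fun V hV => ⟨(hcS hV).1, (hcS hV).2.2.1, (hcS hV).2.2.2⟩)
      · -- upper bound
        intro V hVc
        exact (Set.subset_sUnion_of_mem hVc).trans (subset_varGen _)
    obtain ⟨W, hUW, hWS, hWmax⟩ := zorn_subset_nonempty S hchain U hUS
    obtain ⟨hWvar, hUW', hWA, hAW⟩ := hWS
    refine ⟨W, hWvar, hUW, ⟨hWA, fun h => hAW (h (subset_varGen {A} rfl))⟩, ?_⟩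
    rintro ⟨V', hV'var, hWV', hV'A⟩
    have hAnotV' : A ∉ V' := by
      intro h
      exact hV'A.ne (key V' hV'var hV'A.subset h)
    have hV'S : V' ∈ S := ⟨hV'var, hUW.trans hWV'.subset, hV'A.subset, hAnotV'⟩
    exact hWV'.ne.symm (Set.Subset.antisymm (hWmax hV'S hWV'.subset) hWV'.subset)
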